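/- arXiv:2304.00392 — 2 statements merged into one kernel-verified Lean document; each statement's English description precedes it below -/
import Mathlib

section
/- Let h(y|x) be a likelihood function with 0 < c ≤ h(y|x) ≤ C < ∞ for all x (for fixed y). Then the Bayes operator B_y π = h(y|·)π(·)/∫ h(y|x)π(dx) satisfies ‖B_y μ − B_y ν‖_{TV} ≤ (2C/c) ‖μ − ν‖_{TV} for all probability measures μ, ν. -/
open MeasureTheory

/-- Total variation distance: sup over measurable sets of |μ(A) − ν(A)|. -/
noncomputable def tvDist {n : ℕ} (μ ν : Measure (EuclideanSpace ℝ (Fin n))) : ℝ :=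
  ⨆ s : {s : Set (EuclideanSpace ℝ (Fin n)) // MeasurableSet s},
    |(μ s.1).toReal - (ν s.1).toReal|

/-- The Bayes (conditioning) operator: reweight `π` by the likelihood `ℓ` and normalize. -/
noncomputable def bayes {n : ℕ} (ℓ : EuclideanSpace ℝ (Fin n) → ℝ)
    (π : Measure (EuclideanSpace ℝ (Fin n))) : Measure (EuclideanSpace ℝ (Fin n)) :=
  (∫⁻ x, ENNReal.ofReal (ℓ x) ∂π)⁻¹ • π.withDensity (fun x => ENNReal.ofReal (ℓ x))

section Aux

variable {n : ℕ}

local notation "E" => EuclideanSpace ℝ (Fin n)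

lemma tv_bdd (μ ν : Measure E) [IsProbabilityMeasure μ] [IsProbabilityMeasure ν] :
    BddAbove (Set.range fun s : {s : Set E // MeasurableSet s} =>
      |(μ s.1).toReal - (ν s.1).toReal|) := by
  refine ⟨2, ?_⟩
  rintro x ⟨s, rfl⟩
  have h1 : (μ s.1).toReal ≤ 1 := by
    have := prob_le_one (μ := μ) (s := s.1)
    simpa using ENNReal.toReal_mono (by simp) this
  have h2 : (ν s.1).toReal ≤ 1 := by
    have := prob_le_one (μ := ν) (s := s.1)
    simpa using ENNReal.toReal_mono (by simp) this
  have h3 : 0 ≤ (μ s.1).toReal := ENNReal.toReal_nonneg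
  have h4 : 0 ≤ (ν s.1).toReal := ENNReal.toReal_nonneg
  rw [abs_le]; constructor <;> linarith

lemma tv_le (μ ν : Measure E) [IsProbabilityMeasure μ] [IsProbabilityMeasure ν]
    (A : Set E) (hA : MeasurableSet A) :
    |(μ A).toReal - (ν A).toReal| ≤ tvDist μ ν :=
  le_ciSup (tv_bdd μ ν) ⟨A, hA⟩

lemma tv_nonneg (μ ν : Measure E) [IsProbabilityMeasure μ] [IsProbabilityMeasure ν] :
    0 ≤ tvDist μ ν :=
  le_trans (by simp) (tv_le μ ν ∅ MeasurableSet.empty)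

lemma tv_symm (μ ν : Measure E) : tvDist μ ν = tvDist ν μ := by
  unfold tvDist
  exact iSup_congr fun s => abs_sub_comm _ _

lemma intg (ℓ : E → ℝ) (hℓ : Measurable ℓ) (c C : ℝ)
    (hbound : ∀ x, c ≤ ℓ x ∧ ℓ x ≤ C)
    (μ : Measure E) [IsFiniteMeasure μ] (B : Set E) :
    Integrable ℓ (μ.restrict B) := by
  refine Integrable.mono' (integrable_const (max |c| |C|))
    hℓ.aestronglyMeasurable (ae_of_all _ fun x => ?_)
  rw [Real.norm_eq_abs, abs_le]
  constructor
  · have := (hbound x).1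
    have := neg_abs_le c
    linarith [le_max_left |c| |C|]
  · have := (hbound x).2
    have := le_abs_self C
    linarith [le_max_right |c| |C|]

lemma key_one_sided (ℓ : E → ℝ) (hℓ : Measurable ℓ) (c C : ℝ) (hc : 0 < c)
    (hbound : ∀ x, c ≤ ℓ x ∧ ℓ x ≤ C)
    (μ ν : Measure E) [IsProbabilityMeasure μ] [IsProbabilityMeasure ν]
    (B : Set E) (hB : MeasurableSet B) :
    ∫ x in B, ℓ x ∂μ - ∫ x in B, ℓ x ∂ν ≤ C * tvDist μ ν := by
  obtain ⟨s, hs, hsub1, hsub2⟩ := hahn_decomposition (μ := μ) (ν := ν)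
  have hC : 0 < C := lt_of_lt_of_le hc (le_trans (hbound 0).1 (hbound 0).2)
  have hD : MeasurableSet (B ∩ s) := hB.inter hs
  have hDc : MeasurableSet (B ∩ sᶜ) := hB.inter hs.compl
  have hnn : ∀ (π : Measure E) (D : Set E), (0 : E → ℝ) ≤ᵐ[π.restrict D] ℓ :=
    fun π D => ae_of_all _ fun x => le_trans hc.le (hbound x).1
  have hdisj : Disjoint (B ∩ s) (B ∩ sᶜ) :=
    Disjoint.mono inf_le_right inf_le_right disjoint_compl_right
  have hsplit : ∀ (π : Measure E) [IsProbabilityMeasure π],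
      ∫ x in B, ℓ x ∂π = ∫ x in B ∩ s, ℓ x ∂π + ∫ x in B ∩ sᶜ, ℓ x ∂π := by
    intro π _
    rw [← setIntegral_union hdisj hDc (intg ℓ hℓ c C hbound π _) (intg ℓ hℓ c C hbound π _),
      Set.inter_union_compl]
  rw [hsplit μ, hsplit ν]
  -- second pieces: μ ≤ ν on subsets of sᶜ
  have h2 : ∫ x in B ∩ sᶜ, ℓ x ∂μ ≤ ∫ x in B ∩ sᶜ, ℓ x ∂ν := by
    refine integral_mono_measure ?_ (hnn ν _) (intg ℓ hℓ c C hbound ν _)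
    refine Measure.le_iff.mpr fun t ht => ?_
    rw [Measure.restrict_apply ht, Measure.restrict_apply ht]
    exact hsub2 _ (ht.inter hDc) fun x hx => hx.2.2
  -- first pieces
  have hmono : ν.restrict (B ∩ s) ≤ μ.restrict (B ∩ s) := by
    refine Measure.le_iff.mpr fun t ht => ?_
    rw [Measure.restrict_apply ht, Measure.restrict_apply ht]
    exact hsub1 _ (ht.inter hD) fun x hx => hx.2.2
  have h1 : ∫ x in B ∩ s, (C - ℓ x) ∂ν ≤ ∫ x in B ∩ s, (C - ℓ x) ∂μ := by
    refine integral_mono_measure hmono (ae_of_all _ fun x => ?_)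
      ((integrable_const C).sub (intg ℓ hℓ c C hbound μ _))
    simp [(hbound x).2]
  rw [integral_sub (integrable_const C) (intg ℓ hℓ c C hbound ν _),
    integral_sub (integrable_const C) (intg ℓ hℓ c C hbound μ _),
    setIntegral_const, setIntegral_const, smul_eq_mul, smul_eq_mul] at h1
  have h3 : (μ (B ∩ s)).toReal - (ν (B ∩ s)).toReal ≤ tvDist μ ν :=
    le_trans (le_abs_self _) (tv_le μ ν _ hD)
  have h4 : C * ((μ (B ∩ s)).toReal - (ν (B ∩ s)).toReal) ≤ C * tvDist μ ν :=
    mul_le_mul_of_nonneg_left h3 hC.le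
  simp only [Measure.real] at h1
  nlinarith [h1, h2, h4]

lemma key_abs (ℓ : E → ℝ) (hℓ : Measurable ℓ) (c C : ℝ) (hc : 0 < c)
    (hbound : ∀ x, c ≤ ℓ x ∧ ℓ x ≤ C)
    (μ ν : Measure E) [IsProbabilityMeasure μ] [IsProbabilityMeasure ν]
    (B : Set E) (hB : MeasurableSet B) :
    |∫ x in B, ℓ x ∂μ - ∫ x in B, ℓ x ∂ν| ≤ C * tvDist μ ν := by
  rw [abs_sub_le_iff]
  refine ⟨key_one_sided ℓ hℓ c C hc hbound μ ν B hB, ?_⟩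
  rw [tv_symm]
  exact key_one_sided ℓ hℓ c C hc hbound ν μ B hB

lemma brep (ℓ : E → ℝ) (hℓ : Measurable ℓ) (c C : ℝ) (hc : 0 < c)
    (hbound : ∀ x, c ≤ ℓ x ∧ ℓ x ≤ C)
    (π : Measure E) [IsProbabilityMeasure π] (A : Set E) (hA : MeasurableSet A) :
    (bayes ℓ π A).toReal = (∫ x in A, ℓ x ∂π) / (∫ x, ℓ x ∂π) := by
  have hC : 0 < C := lt_of_lt_of_le hc (le_trans (hbound 0).1 (hbound 0).2)
  have hZlb : ENNReal.ofReal c ≤ ∫⁻ x, ENNReal.ofReal (ℓ x) ∂π := by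
    calc ENNReal.ofReal c = ∫⁻ _, ENNReal.ofReal c ∂π := by simp
    _ ≤ _ := lintegral_mono fun x => ENNReal.ofReal_le_ofReal (hbound x).1
  have hZub : ∫⁻ x, ENNReal.ofReal (ℓ x) ∂π ≤ ENNReal.ofReal C := by
    calc ∫⁻ x, ENNReal.ofReal (ℓ x) ∂π ≤ ∫⁻ _, ENNReal.ofReal C ∂π :=
      lintegral_mono fun x => ENNReal.ofReal_le_ofReal (hbound x).2
    _ = ENNReal.ofReal C := by simp
  have hZ0 : ∫⁻ x, ENNReal.ofReal (ℓ x) ∂π ≠ 0 :=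
    fun h => by simp [h] at hZlb; exact absurd hZlb (by simpa using hc)
  have hZtop : ∫⁻ x, ENNReal.ofReal (ℓ x) ∂π ≠ ⊤ :=
    ne_top_of_le_ne_top ENNReal.ofReal_ne_top hZub
  have hIA : ∫⁻ x in A, ENNReal.ofReal (ℓ x) ∂π ≠ ⊤ :=
    ne_top_of_le_ne_top hZtop (lintegral_mono' Measure.restrict_le_self le_rfl)
  rw [bayes, Measure.smul_apply, withDensity_apply _ hA, smul_eq_mul,
    ENNReal.toReal_mul, ENNReal.toReal_inv]
  rw [integral_eq_lintegral_of_nonneg_ae (ae_of_all _ fun x => le_trans hc.le (hbound x).1)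
    hℓ.aestronglyMeasurable,
    integral_eq_lintegral_of_nonneg_ae (ae_of_all _ fun x => le_trans hc.le (hbound x).1)
    hℓ.aestronglyMeasurable]
  rw [div_eq_mul_inv, mul_comm]

end Aux

theorem stmt9 {n : ℕ} (ℓ : EuclideanSpace ℝ (Fin n) → ℝ) (hℓ : Measurable ℓ)
    (c C : ℝ) (hc : 0 < c)
    (hbound : ∀ x, c ≤ ℓ x ∧ ℓ x ≤ C) :
    ∀ μ ν : Measure (EuclideanSpace ℝ (Fin n)),
      IsProbabilityMeasure μ → IsProbabilityMeasure ν →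
      tvDist (bayes ℓ μ) (bayes ℓ ν) ≤ (2 * C / c) * tvDist μ ν := by
  intro μ ν hμ hν
  have hC : 0 < C := lt_of_lt_of_le hc (le_trans (hbound 0).1 (hbound 0).2)
  have hnn : ∀ (π : Measure (EuclideanSpace ℝ (Fin n))) (D : Set (EuclideanSpace ℝ (Fin n))),
      (0 : EuclideanSpace ℝ (Fin n) → ℝ) ≤ᵐ[π.restrict D] ℓ :=
    fun π D => ae_of_all _ fun x => le_trans hc.le (hbound x).1
  -- bounds on normalizers
  have hZlb : ∀ (π : Measure (EuclideanSpace ℝ (Fin n))) [IsProbabilityMeasure π],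
      c ≤ ∫ x, ℓ x ∂π := by
    intro π _
    calc c = ∫ _, c ∂π := by simp
    _ ≤ ∫ x, ℓ x ∂π := by
        refine integral_mono (integrable_const c) ?_ fun x => (hbound x).1
        simpa using intg ℓ hℓ c C hbound π Set.univ
  have htv : 0 ≤ tvDist μ ν := tv_nonneg μ ν
  refine ciSup_le fun ⟨A, hA⟩ => ?_
  rw [brep ℓ hℓ c C hc hbound μ A hA, brep ℓ hℓ c C hc hbound ν A hA]
  set a := ∫ x in A, ℓ x ∂μ with ha
  set b := ∫ x in A, ℓ x ∂ν with hb
  set p := ∫ x, ℓ x ∂μ with hp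
  set q := ∫ x, ℓ x ∂ν with hq
  have hcp : c ≤ p := hZlb μ
  have hcq : c ≤ q := hZlb ν
  have hp0 : 0 < p := lt_of_lt_of_le hc hcp
  have hq0 : 0 < q := lt_of_lt_of_le hc hcq
  have hb0 : 0 ≤ b := setIntegral_nonneg hA fun x _ => le_trans hc.le (hbound x).1
  have hbq : b ≤ q := setIntegral_le_integral (by simpa using intg ℓ hℓ c C hbound ν Set.univ)
    (ae_of_all _ fun x => le_trans hc.le (hbound x).1)
  set K := C * tvDist μ ν with hK
  have hK0 : 0 ≤ K := mul_nonneg hC.le htv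
  have hab : |a - b| ≤ K := key_abs ℓ hℓ c C hc hbound μ ν A hA
  have hpq : |p - q| ≤ K := by
    have := key_abs ℓ hℓ c C hc hbound μ ν Set.univ MeasurableSet.univ
    simpa [Measure.restrict_univ] using this
  have heq : a / p - b / q = (a - b) / p + (b / q) * ((q - p) / p) := by
    field_simp
    ring
  calc |a / p - b / q| ≤ |(a - b) / p| + |(b / q) * ((q - p) / p)| := by
        rw [heq]; exact abs_add_le _ _
  _ ≤ K / c + 1 * (K / c) := by
      gcongr
      · rw [abs_div, abs_of_pos hp0]
        exact div_le_div₀ hK0 hab hc hcp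
      · rw [abs_mul]
        refine mul_le_mul ?_ ?_ (abs_nonneg _) zero_le_one
        · rw [abs_div, abs_of_pos hq0, abs_of_nonneg hb0]
          exact div_le_one_of_le₀ hbq hq0.le
        · rw [abs_div, abs_of_pos hp0, abs_sub_comm]
          exact div_le_div₀ hK0 hpq hc hcp
  _ = (2 * C / c) * tvDist μ ν := by rw [hK]; ring
end

section
/- Let π be a probability measure on ℝⁿ, h(y|x) a likelihood, and for each y let T_y be a map with T_y#π = B_y π, where B_y π = h(y|·)π / ∫h(y|x)dπ(x) is the Bayes update. If X ~ π and Y ~ ∫ h(·|x) dπ(x) (the marginal of Y), and X̄ ~ π is independent of (X,Y), then the pair (T_Y(X̄), Y) has the same joint distribution as (X, Y). -/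
open MeasureTheory ProbabilityTheory

theorem stmt17 {n m : ℕ}
    (π : Measure (EuclideanSpace ℝ (Fin n))) [IsProbabilityMeasure π]
    -- the likelihood, as a Markov kernel `x ↦ h(·|x)`
    (k : Kernel (EuclideanSpace ℝ (Fin n)) (EuclideanSpace ℝ (Fin m)))
    [IsMarkovKernel k]
    (T : EuclideanSpace ℝ (Fin m) → EuclideanSpace ℝ (Fin n) → EuclideanSpace ℝ (Fin n))
    (hT : Measurable fun p : EuclideanSpace ℝ (Fin m) × EuclideanSpace ℝ (Fin n) => T p.1 p.2)
    -- `T_y` pushes the prior `π` to the posterior `B_y π`, i.e. the conditional law of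
    -- `X` given `Y = y`, for a.e. `y` under the marginal law of `Y`
    (hpush : ∀ᵐ y ∂((π ⊗ₘ k).snd),
      π.map (T y) = ((π ⊗ₘ k).map Prod.swap).condKernel y) :
    -- `(T_Y(X̄), Y)`, with `X̄ ∼ π` independent of `(X, Y)`, has the law of `(X, Y)`
    (π.prod ((π ⊗ₘ k).snd)).map
        (fun p : EuclideanSpace ℝ (Fin n) × EuclideanSpace ℝ (Fin m) => (T p.2 p.1, p.2))
      = π ⊗ₘ k := by
  set μ := π ⊗ₘ k with hμ
  set ν := μ.snd with hν
  set μ' := μ.map Prod.swap with hμ'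
  have hg : Measurable fun q : EuclideanSpace ℝ (Fin m) × EuclideanSpace ℝ (Fin n) =>
      ((q.1, T q.1 q.2) : EuclideanSpace ℝ (Fin m) × EuclideanSpace ℝ (Fin n)) :=
    measurable_fst.prodMk hT
  have hf : Measurable fun p : EuclideanSpace ℝ (Fin n) × EuclideanSpace ℝ (Fin m) =>
      ((T p.2 p.1, p.2) : EuclideanSpace ℝ (Fin n) × EuclideanSpace ℝ (Fin m)) :=
    (hT.comp measurable_swap).prodMk measurable_snd
  -- key: (ν.prod π).map g = μ'
  have key : (ν.prod π).map
      (fun q : EuclideanSpace ℝ (Fin m) × EuclideanSpace ℝ (Fin n) => (q.1, T q.1 q.2)) = μ' := by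
    have hfst : μ'.fst = ν := Measure.fst_map_swap
    have hdis : ν ⊗ₘ μ'.condKernel = μ' := by
      rw [← hfst]; exact μ'.disintegrate _
    rw [← hdis]
    ext s hs
    rw [Measure.map_apply hg hs, Measure.compProd_apply hs,
      Measure.prod_apply (hg hs)]
    refine lintegral_congr_ae ?_
    filter_upwards [hpush] with y hy
    have hTy : Measurable (T y) := hT.comp (measurable_const.prodMk measurable_id)
    have : π ((fun x => (y, T y x)) ⁻¹' s) = (π.map (T y)) (Prod.mk y ⁻¹' s) := by
      rw [Measure.map_apply hTy (measurable_prodMk_left hs)]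
      rfl
    rw [show (Prod.mk y ⁻¹' ((fun q => (q.1, T q.1 q.2)) ⁻¹' s)) = (fun x => (y, T y x)) ⁻¹' s from rfl,
      this, hy]
  calc (π.prod ν).map (fun p => (T p.2 p.1, p.2))
      = ((ν.prod π).map Prod.swap).map (fun p => (T p.2 p.1, p.2)) := by
        rw [Measure.prod_swap]
    _ = ((ν.prod π).map (fun q => (q.1, T q.1 q.2))).map Prod.swap := by
        rw [Measure.map_map hf measurable_swap, Measure.map_map measurable_swap hg]
        rfl
    _ = μ := by rw [key, hμ', Measure.map_map measurable_swap measurable_swap,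
        Prod.swap_swap_eq, Measure.map_id]
end
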